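/- Let a, b, c, d be positive real numbers with ε₁a + ε₂b + ε₃c + ε₄d ≠ 0 for every choice of signs εᵢ ∈ {+1, −1}, and such that each of a, b, c, d is less than the sum of the other three. Then the configuration space M = {(v₁,v₂,v₃,v₄) ∈ ℂ⁴ : |v₂−v₁| = a, |v₃−v₂| = b, |v₄−v₃| = c, |v₁−v₄| = d} is a connected subset of ℂ⁴ if and only if (a+b−c−d)(a−b+c−d)(a−b−c+d) ≥ 0. -/

import Mathlib

set_option maxHeartbeats 1000000

/-- Non-degeneracy of the linkage `Q(a,b,c,d)`. -/
def NonDeg (a b c d : ℝ) : Prop :=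
  ∀ ε₁ ε₂ ε₃ ε₄ : ℝ, (ε₁ = 1 ∨ ε₁ = -1) → (ε₂ = 1 ∨ ε₂ = -1) →
    (ε₃ = 1 ∨ ε₃ = -1) → (ε₄ = 1 ∨ ε₄ = -1) →
    ε₁ * a + ε₂ * b + ε₃ * c + ε₄ * d ≠ 0

/-- Each side-length is less than the sum of the other three. -/
def StrictQuad (a b c d : ℝ) : Prop :=
  a < b + c + d ∧ b < a + c + d ∧ c < a + b + d ∧ d < a + b + c

namespace Stmt8Aux

/-! ### Triangle coordinates over a diagonal of length `r` -/

noncomputable def XX (p q r : ℝ) : ℝ := (p^2 + r^2 - q^2) / (2*r)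
noncomputable def YY (p q r : ℝ) : ℝ := Real.sqrt (p^2 - XX p q r ^ 2)

lemma two_r_XX {p q r : ℝ} (hr : r ≠ 0) : 2*r*XX p q r = p^2 + r^2 - q^2 := by
  unfold XX; field_simp

lemma sq_XX_le {p q r : ℝ} (hp : 0 ≤ p) (hq : 0 ≤ q) (hr : 0 < r)
    (h1 : |p - q| ≤ r) (h3 : r ≤ p + q) : XX p q r ^ 2 ≤ p ^ 2 := by
  obtain ⟨h1a, h1b⟩ := abs_le.mp h1
  have key := two_r_XX (p := p) (q := q) hr.ne'
  have hA : 0 ≤ p - XX p q r := by nlinarith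
  have hB : 0 ≤ p + XX p q r := by nlinarith
  nlinarith

lemma sq_XX_lt {p q r : ℝ} (hp : 0 ≤ p) (hq : 0 ≤ q) (hr : 0 < r)
    (h1 : |p - q| < r) (h3 : r < p + q) : XX p q r ^ 2 < p ^ 2 := by
  obtain ⟨h1a, h1b⟩ := abs_lt.mp h1
  have key := two_r_XX (p := p) (q := q) hr.ne'
  have hA : 0 < p - XX p q r := by nlinarith
  have hB : 0 < p + XX p q r := by nlinarith
  nlinarith

lemma sq_YY {p q r : ℝ} (hp : 0 ≤ p) (hq : 0 ≤ q) (hr : 0 < r)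
    (h1 : |p - q| ≤ r) (h3 : r ≤ p + q) : YY p q r ^ 2 = p ^ 2 - XX p q r ^ 2 := by
  unfold YY
  exact Real.sq_sqrt (by linarith [sq_XX_le hp hq hr h1 h3])

lemma YY_pos {p q r : ℝ} (hp : 0 ≤ p) (hq : 0 ≤ q) (hr : 0 < r)
    (h1 : |p - q| < r) (h3 : r < p + q) : 0 < YY p q r := by
  unfold YY
  exact Real.sqrt_pos.mpr (by linarith [sq_XX_lt hp hq hr h1 h3])

lemma YY_right {p q : ℝ} (hpq : 0 < p + q) : YY p q (p + q) = 0 := by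
  have hX : XX p q (p + q) = p := by
    unfold XX; field_simp; ring
  unfold YY
  rw [hX]; simp

lemma YY_left {p q : ℝ} (hpq : p ≠ q) : YY p q |p - q| = 0 := by
  have h0 : p - q ≠ 0 := sub_ne_zero.mpr hpq
  have habs : |p - q| ≠ 0 := abs_ne_zero.mpr h0
  have hX : XX p q |p - q| ^ 2 = p ^ 2 := by
    unfold XX
    rw [div_pow, sq_abs]
    rw [show p^2 + (p-q)^2 - q^2 = 2*p*(p-q) by ring]
    rw [show (2*|p-q|)^2 = 4*(p-q)^2 by rw [mul_pow, sq_abs]; ring]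
    field_simp
    ring
  unfold YY
  rw [hX]; simp

lemma abs_mk (x y : ℝ) : ‖(⟨x, y⟩ : ℂ)‖ = Real.sqrt (x^2 + y^2) := by
  rw [Complex.norm_def, Complex.normSq_mk]; ring_nf

lemma abs_cfg_fst {p q r σ : ℝ} (hσ : σ^2 = 1) (hp : 0 ≤ p) (hq : 0 ≤ q) (hr : 0 < r)
    (h1 : |p - q| ≤ r) (h3 : r ≤ p + q) :
    ‖(⟨XX p q r, σ * YY p q r⟩ : ℂ)‖ = p := by
  rw [abs_mk]
  have : (σ * YY p q r)^2 = p^2 - XX p q r ^ 2 := by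
    rw [mul_pow, hσ, one_mul, sq_YY hp hq hr h1 h3]
  rw [this, show XX p q r ^2 + (p^2 - XX p q r ^2) = p^2 by ring, Real.sqrt_sq hp]

lemma abs_cfg_snd {p q r σ : ℝ} (hσ : σ^2 = 1) (hp : 0 ≤ p) (hq : 0 ≤ q) (hr : 0 < r)
    (h1 : |p - q| ≤ r) (h3 : r ≤ p + q) :
    ‖((r:ℂ) - ⟨XX p q r, σ * YY p q r⟩)‖ = q := by
  have he : (r:ℂ) - ⟨XX p q r, σ * YY p q r⟩ = ⟨r - XX p q r, -(σ * YY p q r)⟩ := by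
    apply Complex.ext <;> simp
  rw [he, abs_mk]
  have h2 : (-(σ * YY p q r))^2 = p^2 - XX p q r ^ 2 := by
    rw [neg_pow, mul_pow, hσ]; rw [sq_YY hp hq hr h1 h3]; ring
  rw [h2]
  have key := two_r_XX (p := p) (q := q) hr.ne'
  rw [show (r - XX p q r)^2 + (p^2 - XX p q r^2) = q^2 by nlinarith, Real.sqrt_sq hq]

/-! ### The configuration space and the standard configurations -/

def Mset (a b c d : ℝ) : Set (ℂ × ℂ × ℂ × ℂ) :=
  {v | ‖(v.2.1 - v.1)‖ = a ∧ ‖(v.2.2.1 - v.2.1)‖ = b ∧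
       ‖(v.2.2.2 - v.2.2.1)‖ = c ∧ ‖(v.1 - v.2.2.2)‖ = d}

noncomputable def cfg (a b c d r σ₁ σ₂ : ℝ) : ℂ × ℂ × ℂ × ℂ :=
  (0, ⟨XX a b r, σ₁ * YY a b r⟩, (r:ℂ), ⟨XX d c r, σ₂ * YY d c r⟩)

lemma cfg_mem {a b c d r σ₁ σ₂ : ℝ} (ha : 0 ≤ a) (hb : 0 ≤ b) (hc : 0 ≤ c) (hd : 0 ≤ d)
    (hr : 0 < r) (hσ₁ : σ₁^2 = 1) (hσ₂ : σ₂^2 = 1)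
    (h1 : |a - b| ≤ r) (h2 : r ≤ a + b) (h3 : |d - c| ≤ r) (h4 : r ≤ d + c) :
    cfg a b c d r σ₁ σ₂ ∈ Mset a b c d := by
  refine ⟨?_, ?_, ?_, ?_⟩
  · show ‖((⟨XX a b r, σ₁ * YY a b r⟩ : ℂ) - 0)‖ = a
    rw [sub_zero]; exact abs_cfg_fst hσ₁ ha hb hr h1 h2
  · show ‖((r:ℂ) - ⟨XX a b r, σ₁ * YY a b r⟩)‖ = b
    exact abs_cfg_snd hσ₁ ha hb hr h1 h2
  · show ‖(⟨XX d c r, σ₂ * YY d c r⟩ - (r:ℂ))‖ = c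
    rw [← norm_neg, neg_sub]; exact abs_cfg_snd hσ₂ hd hc hr h3 h4
  · show ‖((0:ℂ) - ⟨XX d c r, σ₂ * YY d c r⟩)‖ = d
    rw [zero_sub, norm_neg]; exact abs_cfg_fst hσ₂ hd hc hr h3 h4

lemma normSq_of_abs {z : ℂ} {a : ℝ} (h : ‖z‖ = a) :
    z.re^2 + z.im^2 = a^2 := by
  have := Complex.sq_norm z
  rw [h, Complex.normSq_apply] at this
  nlinarith [this]

lemma exists_cfg {a b c d r : ℝ} {v : ℂ × ℂ × ℂ × ℂ} (hv : v ∈ Mset a b c d)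
    (ha : 0 ≤ a) (hb : 0 ≤ b) (hc : 0 ≤ c) (hd : 0 ≤ d)
    (h1 : v.1 = 0) (h3 : v.2.2.1 = (r:ℂ)) (hr : 0 < r)
    (hb1 : |a - b| ≤ r) (hb2 : r ≤ a + b) (hb3 : |d - c| ≤ r) (hb4 : r ≤ d + c) :
    ∃ σ₁ σ₂ : ℝ, σ₁^2 = 1 ∧ σ₂^2 = 1 ∧ v = cfg a b c d r σ₁ σ₂ := by
  obtain ⟨e1, e2, e3, e4⟩ := hv
  rw [h1, sub_zero] at e1
  rw [h3] at e2 e3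
  rw [h1, zero_sub, norm_neg] at e4
  set z := v.2.1 with hz
  set w := v.2.2.2 with hw
  have q1 : z.re^2 + z.im^2 = a^2 := normSq_of_abs e1
  have q2 : (r - z.re)^2 + z.im^2 = b^2 := by
    have := normSq_of_abs e2
    simpa using this
  have q4 : w.re^2 + w.im^2 = d^2 := normSq_of_abs e4
  have q3 : (w.re - r)^2 + w.im^2 = c^2 := by
    have := normSq_of_abs e3
    simpa using this
  have hzre : z.re = XX a b r := by
    have h2r : 2*r*z.re = a^2 + r^2 - b^2 := by nlinarith
    unfold XX; field_simp; linarith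
  have hwre : w.re = XX d c r := by
    have h2r : 2*r*w.re = d^2 + r^2 - c^2 := by nlinarith
    unfold XX; field_simp; linarith
  have hzim : z.im^2 = YY a b r ^ 2 := by
    rw [sq_YY ha hb hr hb1 hb2, ← hzre]; linarith
  have hwim : w.im^2 = YY d c r ^ 2 := by
    rw [sq_YY hd hc hr hb3 hb4, ← hwre]; linarith
  have sqcase : ∀ x y : ℝ, x^2 = y^2 → x = y ∨ x = -y := by
    intro x y h
    have h2 : (x - y) * (x + y) = 0 := by ring_nf; linarith
    rcases mul_eq_zero.mp h2 with h3 | h3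
    · left; linarith
    · right; linarith
  have hz2 := sqcase _ _ hzim
  have hw2 := sqcase _ _ hwim
  refine ⟨if z.im = YY a b r then 1 else -1, if w.im = YY d c r then 1 else -1, ?_, ?_, ?_⟩
  · split <;> norm_num
  · split <;> norm_num
  · have hv4 : v = (v.1, v.2.1, v.2.2.1, v.2.2.2) := rfl
    rw [hv4, h1, h3]
    unfold cfg
    refine Prod.ext rfl (Prod.ext ?_ (Prod.ext rfl ?_))
    · show z = _
      apply Complex.ext
      · simpa using hzre
      · show z.im = (if z.im = YY a b r then (1:ℝ) else -1) * YY a b r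
        split
        · simpa
        · rcases hz2 with h | h
          · tauto
          · simpa using h
    · show w = _
      apply Complex.ext
      · simpa using hwre
      · show w.im = (if w.im = YY d c r then (1:ℝ) else -1) * YY d c r
        split
        · simpa
        · rcases hw2 with h | h
          · tauto
          · simpa using h

/-! ### Paths in the configuration space -/

lemma rot_abs (θ : ℝ) (z : ℂ) :
    ‖(z * Complex.exp ((θ:ℝ) * Complex.I))‖ = ‖z‖ := by
  rw [norm_mul, Complex.norm_exp_ofReal_mul_I, mul_one]

lemma rot_to_abs (z : ℂ) : z * Complex.exp ((-z.arg : ℝ) * Complex.I) = (‖z‖ : ℂ) := by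
  have h : z = (‖z‖ : ℂ) * Complex.exp ((z.arg:ℝ) * Complex.I) :=
    (Complex.norm_mul_exp_arg_mul_I z).symm
  calc z * Complex.exp ((-z.arg : ℝ) * Complex.I)
      = (‖z‖ : ℂ) * (Complex.exp ((z.arg:ℝ) * Complex.I) *
          Complex.exp ((-z.arg : ℝ) * Complex.I)) := by rw [← mul_assoc, ← h]
    _ = (‖z‖ : ℂ) := by
        rw [← Complex.exp_add,
          show ((z.arg:ℝ) : ℂ) * Complex.I + ((-z.arg : ℝ) : ℂ) * Complex.I = 0 by
            push_cast; ring, Complex.exp_zero, mul_one]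

/-- Normalization: every configuration is joined to one with `v₁ = 0` and
    `v₃` on the nonnegative real axis. -/
lemma joined_normalize {a b c d : ℝ} {v : ℂ × ℂ × ℂ × ℂ} (hv : v ∈ Mset a b c d) :
    ∃ w ∈ Mset a b c d, JoinedIn (Mset a b c d) v w ∧ w.1 = 0 ∧
      w.2.2.1 = ((‖(v.2.2.1 - v.1)‖ : ℝ) : ℂ) := by
  set θ : ℝ := (v.2.2.1 - v.1).arg with hθ
  set φ : ℝ → ℂ → ℂ := fun t z => (z - (t:ℂ) * v.1) * Complex.exp ((-(t * θ) : ℝ) * Complex.I)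
    with hφ
  have hdist : ∀ (t : ℝ) (z z' : ℂ),
      ‖(φ t z - φ t z')‖ = ‖(z - z')‖ := by
    intro t z z'
    have : φ t z - φ t z' = (z - z') * Complex.exp ((-(t * θ) : ℝ) * Complex.I) := by
      simp only [hφ]; ring
    rw [this, rot_abs]
  set w : ℂ × ℂ × ℂ × ℂ := (φ 1 v.1, φ 1 v.2.1, φ 1 v.2.2.1, φ 1 v.2.2.2) with hwdef
  have hmem : ∀ t : ℝ, (φ t v.1, φ t v.2.1, φ t v.2.2.1, φ t v.2.2.2) ∈ Mset a b c d := by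
    intro t
    obtain ⟨e1, e2, e3, e4⟩ := hv
    exact ⟨by rw [show (φ t v.1, φ t v.2.1, φ t v.2.2.1, φ t v.2.2.2).2.1 -
        (φ t v.1, φ t v.2.1, φ t v.2.2.1, φ t v.2.2.2).1 = φ t v.2.1 - φ t v.1 from rfl,
        hdist]; exact e1,
      by rw [show _ = φ t v.2.2.1 - φ t v.2.1 from rfl, hdist]; exact e2,
      by rw [show _ = φ t v.2.2.2 - φ t v.2.2.1 from rfl, hdist]; exact e3,
      by rw [show _ = φ t v.1 - φ t v.2.2.2 from rfl, hdist]; exact e4⟩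
  have hcont : ∀ z : ℂ, Continuous (fun t : ℝ => φ t z) := by
    intro z
    apply Continuous.mul
    · fun_prop
    · apply Complex.continuous_exp.comp
      fun_prop
  have hw : w ∈ Mset a b c d := hmem 1
  refine ⟨w, hw, ?_, ?_, ?_⟩
  · exact ⟨{ toFun := fun t => (φ t v.1, φ t v.2.1, φ t v.2.2.1, φ t v.2.2.2)
             continuous_toFun := by
               apply Continuous.prodMk
               · exact (hcont _).comp continuous_subtype_val
               apply Continuous.prodMk
               · exact (hcont _).comp continuous_subtype_val
               apply Continuous.prodMk
               · exact (hcont _).comp continuous_subtype_val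
               · exact (hcont _).comp continuous_subtype_val
             source' := by
               simp only [Set.Icc.coe_zero, hφ]
               norm_num
             target' := rfl },
          fun t => hmem t⟩
  · show φ 1 v.1 = 0
    simp [hφ]
  · show φ 1 v.2.2.1 = _
    have : φ 1 v.2.2.1 = (v.2.2.1 - v.1) * Complex.exp ((-θ : ℝ) * Complex.I) := by
      simp [hφ]
    rw [this, hθ, rot_to_abs]

lemma continuousOn_cfg {a b c d σ₁ σ₂ : ℝ} :
    ContinuousOn (fun r => cfg a b c d r σ₁ σ₂) (Set.Ioi (0:ℝ)) := by
  have hXX : ∀ p q : ℝ, ContinuousOn (fun r => XX p q r) (Set.Ioi (0:ℝ)) := by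
    intro p q
    unfold XX
    apply ContinuousOn.div (by fun_prop) (by fun_prop)
    intro r hr
    have : (0:ℝ) < r := hr
    positivity
  have hYY : ∀ p q : ℝ, ContinuousOn (fun r => YY p q r) (Set.Ioi (0:ℝ)) := by
    intro p q
    unfold YY
    exact Real.continuous_sqrt.comp_continuousOn (by
      exact (continuousOn_const).sub ((hXX p q).pow 2))
  have hmk : ∀ (f g : ℝ → ℝ), ContinuousOn f (Set.Ioi (0:ℝ)) →
      ContinuousOn g (Set.Ioi (0:ℝ)) →
      ContinuousOn (fun r => (⟨f r, g r⟩ : ℂ)) (Set.Ioi (0:ℝ)) := by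
    intro f g hf hg
    have : (fun r => (⟨f r, g r⟩ : ℂ)) = fun r => ((f r : ℝ) : ℂ) + ((g r : ℝ) : ℂ) * Complex.I := by
      funext r
      rw [Complex.mk_eq_add_mul_I]
    rw [this]
    exact (Complex.continuous_ofReal.comp_continuousOn hf).add
      ((Complex.continuous_ofReal.comp_continuousOn hg).mul continuousOn_const)
  unfold cfg
  refine ContinuousOn.prodMk continuousOn_const (ContinuousOn.prodMk ?_ (ContinuousOn.prodMk ?_ ?_))
  · exact hmk _ _ (hXX a b) (continuousOn_const.mul (hYY a b))
  · exact Complex.continuous_ofReal.continuousOn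
  · exact hmk _ _ (hXX d c) (continuousOn_const.mul (hYY d c))

/-- Moving the diagonal length between two feasible values. -/
lemma joined_move {a b c d r₀ r₁ σ₁ σ₂ : ℝ} (ha : 0 ≤ a) (hb : 0 ≤ b) (hc : 0 ≤ c)
    (hd : 0 ≤ d) (hσ₁ : σ₁^2 = 1) (hσ₂ : σ₂^2 = 1)
    (hr₀ : 0 < r₀) (hr₁ : 0 < r₁)
    (h10 : |a - b| ≤ r₀) (h20 : r₀ ≤ a + b) (h30 : |d - c| ≤ r₀) (h40 : r₀ ≤ d + c)
    (h11 : |a - b| ≤ r₁) (h21 : r₁ ≤ a + b) (h31 : |d - c| ≤ r₁) (h41 : r₁ ≤ d + c) :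
    JoinedIn (Mset a b c d) (cfg a b c d r₀ σ₁ σ₂) (cfg a b c d r₁ σ₁ σ₂) := by
  set ρ : ℝ → ℝ := fun t => r₀ + t * (r₁ - r₀) with hρ
  have lo : ∀ m x0 x1 t : ℝ, 0 ≤ t → t ≤ 1 → m ≤ x0 → m ≤ x1 → m ≤ x0 + t * (x1 - x0) := by
    intro m x0 x1 t ht0 ht1 h0 h1
    nlinarith [mul_nonneg ht0 (by linarith : (0:ℝ) ≤ x1 - m),
      mul_nonneg (by linarith : (0:ℝ) ≤ 1 - t) (by linarith : (0:ℝ) ≤ x0 - m)]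
  have hi : ∀ M x0 x1 t : ℝ, 0 ≤ t → t ≤ 1 → x0 ≤ M → x1 ≤ M → x0 + t * (x1 - x0) ≤ M := by
    intro M x0 x1 t ht0 ht1 h0 h1
    have := lo (-M) (-x0) (-x1) t ht0 ht1 (by linarith) (by linarith)
    linarith
  have hρmem : ∀ t : ℝ, 0 ≤ t → t ≤ 1 →
      0 < ρ t ∧ |a - b| ≤ ρ t ∧ ρ t ≤ a + b ∧ |d - c| ≤ ρ t ∧ ρ t ≤ d + c := by
    intro t ht0 ht1
    have hρt : ρ t = r₀ + t * (r₁ - r₀) := rfl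
    rw [hρt]
    have hmin : min r₀ r₁ ≤ r₀ + t * (r₁ - r₀) :=
      lo _ _ _ t ht0 ht1 (min_le_left _ _) (min_le_right _ _)
    refine ⟨lt_of_lt_of_le (lt_min hr₀ hr₁) hmin,
      lo _ _ _ t ht0 ht1 h10 h11, hi _ _ _ t ht0 ht1 h20 h21,
      lo _ _ _ t ht0 ht1 h30 h31, hi _ _ _ t ht0 ht1 h40 h41⟩
  refine ⟨{ toFun := fun t => cfg a b c d (ρ t) σ₁ σ₂
            continuous_toFun := by
              apply continuousOn_cfg.comp_continuous
              · fun_prop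
              · intro t
                exact (hρmem t t.2.1 t.2.2).1
            source' := by simp [hρ]
            target' := by simp [hρ] },
        ?_⟩
  intro t
  obtain ⟨p0, p1, p2, p3, p4⟩ := hρmem t t.2.1 t.2.2
  exact cfg_mem ha hb hc hd p0 hσ₁ hσ₂ p1 p2 p3 p4

/-- Flipping the first sign when the first triangle is degenerate. -/
lemma cfg_flip_fst {a b c d r σ₁ σ₁' σ₂ : ℝ} (h : YY a b r = 0) :
    cfg a b c d r σ₁ σ₂ = cfg a b c d r σ₁' σ₂ := by
  unfold cfg; rw [h]; norm_num

lemma cfg_flip_snd {a b c d r σ₁ σ₂ σ₂' : ℝ} (h : YY d c r = 0) :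
    cfg a b c d r σ₁ σ₂ = cfg a b c d r σ₁ σ₂' := by
  unfold cfg; rw [h]; norm_num

/-! ### A priori bounds on the diagonal -/

lemma r_bounds {a b c d : ℝ} {v : ℂ × ℂ × ℂ × ℂ} (hv : v ∈ Mset a b c d) :
    |a - b| ≤ ‖(v.2.2.1 - v.1)‖ ∧ ‖(v.2.2.1 - v.1)‖ ≤ a + b ∧
    |d - c| ≤ ‖(v.2.2.1 - v.1)‖ ∧ ‖(v.2.2.1 - v.1)‖ ≤ d + c := by
  obtain ⟨e1, e2, e3, e4⟩ := hv
  set A := ‖(v.2.2.1 - v.1)‖ with hA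
  have comm : ∀ z w : ℂ, ‖(z - w)‖ = ‖(w - z)‖ := fun z w =>
    norm_sub_rev z w
  have t1 : A ≤ b + a := by
    have := norm_sub_le_norm_sub_add_norm_sub v.2.2.1 v.2.1 v.1
    rw [e2, e1] at this; exact this
  have t2 : a ≤ b + A := by
    have := norm_sub_le_norm_sub_add_norm_sub v.2.1 v.2.2.1 v.1
    rw [e1, comm v.2.1 v.2.2.1, e2] at this; exact this
  have t3 : b ≤ A + a := by
    have := norm_sub_le_norm_sub_add_norm_sub v.2.2.1 v.1 v.2.1
    rw [e2, comm v.1 v.2.1, e1] at this; exact this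
  have t4 : A ≤ c + d := by
    have := norm_sub_le_norm_sub_add_norm_sub v.2.2.1 v.2.2.2 v.1
    rw [comm v.2.2.1 v.2.2.2, e3, comm v.2.2.2 v.1, e4] at this; exact this
  have t5 : d ≤ A + c := by
    have := norm_sub_le_norm_sub_add_norm_sub v.1 v.2.2.1 v.2.2.2
    rw [e4, comm v.1 v.2.2.1, comm v.2.2.1 v.2.2.2, e3] at this; exact this
  have t6 : c ≤ d + A := by
    have := norm_sub_le_norm_sub_add_norm_sub v.2.2.2 v.1 v.2.2.1
    rw [e3, comm v.2.2.2 v.1, e4, comm v.1 v.2.2.1] at this; exact this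
  exact ⟨abs_sub_le_iff.mpr ⟨by linarith, by linarith⟩, by linarith,
    abs_sub_le_iff.mpr ⟨by linarith, by linarith⟩, by linarith⟩

/-! ### Non-degenerate triangles give a sign invariant -/

lemma collinear_exists {z w : ℂ} (hz : z ≠ 0) (h : (w * (starRingEnd ℂ) z).im = 0) :
    ∃ t : ℝ, w = (t:ℂ) * z := by
  have hnz : Complex.normSq z ≠ 0 := (Complex.normSq_pos.mpr hz).ne'
  refine ⟨(w * (starRingEnd ℂ) z).re / Complex.normSq z, ?_⟩
  have hw : w * (starRingEnd ℂ) z = (((w * (starRingEnd ℂ) z).re : ℝ) : ℂ) := by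
    apply Complex.ext
    · simp
    · simp [h]
  have key : w * ((Complex.normSq z : ℝ) : ℂ) = (((w * (starRingEnd ℂ) z).re : ℝ) : ℂ) * z := by
    rw [← hw, ← Complex.mul_conj z]; ring
  have : w = ((((w * (starRingEnd ℂ) z).re : ℝ) : ℂ) / ((Complex.normSq z : ℝ) : ℂ)) * z := by
    rw [div_mul_eq_mul_div, ← key, mul_div_assoc, div_self (by exact_mod_cast hnz), mul_one]
  simpa [Complex.ofReal_div] using this

lemma not_collinear {p q r t : ℝ} {z w : ℂ} (hzr : ‖z‖ = r)
    (hwp : ‖w‖ = p) (hwzq : ‖(w - z)‖ = q)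
    (hcol : w = (t:ℂ) * z) (hlt1 : |p - q| < r) (hlt2 : r < p + q) : False := by
  have hp : p = |t| * r := by
    rw [← hwp, hcol, norm_mul, Complex.norm_real, Real.norm_eq_abs, hzr]
  have hq : q = |t - 1| * r := by
    have : w - z = ((t - 1 : ℝ) : ℂ) * z := by rw [hcol]; push_cast; ring
    rw [← hwzq, this, norm_mul, Complex.norm_real, Real.norm_eq_abs, hzr]
  have hr0 : 0 < r := lt_of_le_of_lt (abs_nonneg _) hlt1
  rcases le_or_gt t 0 with h | h
  · have e1 : |t| = -t := abs_of_nonpos h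
    have e2 : |t - 1| = -(t - 1) := abs_of_nonpos (by linarith)
    have : q - p = r := by rw [hp, hq, e1, e2]; ring
    have := neg_abs_le (p - q)
    linarith [this]
  · rcases le_or_gt 1 t with h' | h'
    · have e1 : |t| = t := abs_of_pos h
      have e2 : |t - 1| = t - 1 := abs_of_nonneg (by linarith)
      have : p - q = r := by rw [hp, hq, e1, e2]; ring
      linarith [le_abs_self (p - q)]
    · have e1 : |t| = t := abs_of_pos h
      have e2 : |t - 1| = -(t - 1) := abs_of_nonpos (by linarith)
      have : p + q = r := by rw [hp, hq, e1, e2]; ring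
      linarith

/-- In a configuration whose diagonal is strictly between `|d-c|` and `d+c`,
    the triangle `v₁ v₃ v₄` is non-degenerate. -/
lemma inv2_ne {a b c d : ℝ} {v : ℂ × ℂ × ℂ × ℂ} (hv : v ∈ Mset a b c d)
    (h1 : |d - c| < ‖(v.2.2.1 - v.1)‖)
    (h2 : ‖(v.2.2.1 - v.1)‖ < d + c) :
    ((v.2.2.2 - v.1) * (starRingEnd ℂ) (v.2.2.1 - v.1)).im ≠ 0 := by
  intro h0
  have hz : v.2.2.1 - v.1 ≠ 0 := by
    intro h
    rw [h] at h1
    simp at h1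
    linarith [abs_nonneg (d - c), h1]
  obtain ⟨t, ht⟩ := collinear_exists hz h0
  obtain ⟨e1, e2, e3, e4⟩ := hv
  have hwp : ‖(v.2.2.2 - v.1)‖ = d := by
    rw [norm_sub_rev]
    exact e4
  have hwzq : ‖((v.2.2.2 - v.1) - (v.2.2.1 - v.1))‖ = c := by
    rw [show (v.2.2.2 - v.1) - (v.2.2.1 - v.1) = v.2.2.2 - v.2.2.1 by ring]
    exact e3
  exact not_collinear rfl hwp hwzq ht h1 h2

/-- In a configuration whose diagonal is strictly between `|a-b|` and `a+b`,
    the triangle `v₁ v₂ v₃` is non-degenerate. -/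
lemma inv1_ne {a b c d : ℝ} {v : ℂ × ℂ × ℂ × ℂ} (hv : v ∈ Mset a b c d)
    (h1 : |a - b| < ‖(v.2.2.1 - v.1)‖)
    (h2 : ‖(v.2.2.1 - v.1)‖ < a + b) :
    ((v.2.1 - v.1) * (starRingEnd ℂ) (v.2.2.1 - v.1)).im ≠ 0 := by
  intro h0
  have hz : v.2.2.1 - v.1 ≠ 0 := by
    intro h
    rw [h] at h1
    simp at h1
    linarith [abs_nonneg (a - b), h1]
  obtain ⟨t, ht⟩ := collinear_exists hz h0
  obtain ⟨e1, e2, e3, e4⟩ := hv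
  have hwp : ‖(v.2.1 - v.1)‖ = a := e1
  have hwzq : ‖((v.2.1 - v.1) - (v.2.2.1 - v.1))‖ = b := by
    rw [show (v.2.1 - v.1) - (v.2.2.1 - v.1) = -(v.2.2.1 - v.2.1) by ring,
      norm_neg]
    exact e2
  exact not_collinear rfl hwp hwzq ht h1 h2

lemma no_zero_crossing {S : Set (ℂ × ℂ × ℂ × ℂ)} (hS : IsConnected S) {f : ℂ × ℂ × ℂ × ℂ → ℝ}
    (hf : Continuous f) {p q : ℂ × ℂ × ℂ × ℂ} (hp : p ∈ S) (hq : q ∈ S)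
    (hfp : 0 < f p) (hfq : f q < 0) : ∃ v ∈ S, f v = 0 := by
  have himg : IsPreconnected (f '' S) := hS.isPreconnected.image f hf.continuousOn
  have hord := himg.ordConnected
  have h0 : (0:ℝ) ∈ f '' S :=
    hord.out (Set.mem_image_of_mem f hq) (Set.mem_image_of_mem f hp)
      ⟨le_of_lt hfq, le_of_lt hfp⟩
  obtain ⟨v, hvS, hv0⟩ := h0
  exact ⟨v, hvS, hv0⟩

lemma inv2_cfg (a b c d r σ₁ σ₂ : ℝ) :
    (((cfg a b c d r σ₁ σ₂).2.2.2 - (cfg a b c d r σ₁ σ₂).1) *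
      (starRingEnd ℂ) ((cfg a b c d r σ₁ σ₂).2.2.1 - (cfg a b c d r σ₁ σ₂).1)).im
      = σ₂ * YY d c r * r := by
  show ((⟨XX d c r, σ₂ * YY d c r⟩ - 0 : ℂ) * (starRingEnd ℂ) ((r:ℂ) - 0)).im = _
  rw [sub_zero, sub_zero, Complex.conj_ofReal, Complex.mul_im]
  simp

lemma inv1_cfg (a b c d r σ₁ σ₂ : ℝ) :
    (((cfg a b c d r σ₁ σ₂).2.1 - (cfg a b c d r σ₁ σ₂).1) *
      (starRingEnd ℂ) ((cfg a b c d r σ₁ σ₂).2.2.1 - (cfg a b c d r σ₁ σ₂).1)).im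
      = σ₁ * YY a b r * r := by
  show ((⟨XX a b r, σ₁ * YY a b r⟩ - 0 : ℂ) * (starRingEnd ℂ) ((r:ℂ) - 0)).im = _
  rw [sub_zero, sub_zero, Complex.conj_ofReal, Complex.mul_im]
  simp

/-! ### Sign analysis -/

lemma abs_sq_lt {x y : ℝ} (h : x^2 < y^2) : |x| < |y| := by
  by_contra hcon
  push_neg at hcon
  nlinarith [sq_abs x, sq_abs y, abs_nonneg y]

lemma sign_pos_cases {a b c d : ℝ} (h1 : a + b - c - d ≠ 0)
    (h2 : a - b + c - d ≠ 0) (h3 : a - b - c + d ≠ 0)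
    (hP : 0 ≤ (a + b - c - d) * (a - b + c - d) * (a - b - c + d)) :
    (c + d < a + b ∧ |d - c| < |a - b|) ∨ (a + b < c + d ∧ |a - b| < |d - c|) := by
  have key : (a + b - c - d) * (a - b + c - d) * (a - b - c + d)
      = (a + b - c - d) * ((a - b)^2 - (d - c)^2) := by ring
  rw [key] at hP
  have hs : (a - b)^2 - (d - c)^2 ≠ 0 := by
    have := mul_ne_zero h2 h3
    intro h; apply this; nlinarith [h]
  rcases lt_or_gt_of_ne h1 with h | h
  · right
    refine ⟨by linarith, ?_⟩
    have hlt : (a - b)^2 < (d - c)^2 := by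
      rcases lt_or_gt_of_ne hs with h' | h'
      · linarith
      · nlinarith
    exact abs_sq_lt hlt
  · left
    refine ⟨by linarith, ?_⟩
    have hlt : (d - c)^2 < (a - b)^2 := by
      rcases lt_or_gt_of_ne hs with h' | h'
      · nlinarith
      · linarith
    exact abs_sq_lt hlt

lemma sign_neg_cases {a b c d : ℝ}
    (hP : (a + b - c - d) * (a - b + c - d) * (a - b - c + d) < 0) :
    (a + b < c + d ∧ |d - c| < |a - b|) ∨ (c + d < a + b ∧ |a - b| < |d - c|) := by
  have key : (a + b - c - d) * (a - b + c - d) * (a - b - c + d)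
      = (a + b - c - d) * ((a - b)^2 - (d - c)^2) := by ring
  rw [key] at hP
  rcases lt_trichotomy (a + b - c - d) 0 with h | h | h
  · left
    refine ⟨by linarith, ?_⟩
    have hlt : (d - c)^2 < (a - b)^2 := by nlinarith
    exact abs_sq_lt hlt
  · rw [h] at hP; simp at hP
  · right
    refine ⟨by linarith, ?_⟩
    have hlt : (a - b)^2 < (d - c)^2 := by nlinarith
    exact abs_sq_lt hlt

/-! ### The connected case -/

lemma isConnected_of_flips {a b c d L R : ℝ} (ha : 0 ≤ a) (hb : 0 ≤ b) (hc : 0 ≤ c)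
    (hd : 0 ≤ d) (hL0 : 0 < L) (hR0 : 0 < R)
    (hfL1 : |a - b| ≤ L) (hfL2 : L ≤ a + b) (hfL3 : |d - c| ≤ L) (hfL4 : L ≤ d + c)
    (hfR1 : |a - b| ≤ R) (hfR2 : R ≤ a + b) (hfR3 : |d - c| ≤ R) (hfR4 : R ≤ d + c)
    (hLr : L ≤ |a - b| ∨ L ≤ |d - c|)
    (hflip : (YY a b L = 0 ∧ YY d c R = 0) ∨ (YY d c L = 0 ∧ YY a b R = 0)) :
    IsConnected (Mset a b c d) := by
  have hone : (1:ℝ)^2 = 1 := one_pow 2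
  have hbase : cfg a b c d L 1 1 ∈ Mset a b c d :=
    cfg_mem ha hb hc hd hL0 hone hone hfL1 hfL2 hfL3 hfL4
  apply IsPathConnected.isConnected
  refine ⟨cfg a b c d L 1 1, hbase, ?_⟩
  intro y hy
  obtain ⟨rb1, rb2, rb3, rb4⟩ := r_bounds hy
  set r := ‖(y.2.2.1 - y.1)‖ with hrdef
  have hr0 : 0 < r := by
    rcases hLr with h | h
    · exact lt_of_lt_of_le hL0 (le_trans h rb1)
    · exact lt_of_lt_of_le hL0 (le_trans h rb3)
  obtain ⟨w, hw, hjoin, hw1, hw3⟩ := joined_normalize hy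
  obtain ⟨σ₁, σ₂, hσ₁, hσ₂, hwerq⟩ :=
    exists_cfg hw ha hb hc hd hw1 hw3 hr0 rb1 rb2 rb3 rb4
  rw [hwerq] at hjoin
  have j2 : JoinedIn (Mset a b c d) (cfg a b c d r σ₁ σ₂) (cfg a b c d L σ₁ σ₂) :=
    joined_move ha hb hc hd hσ₁ hσ₂ hr0 hL0 rb1 rb2 rb3 rb4 hfL1 hfL2 hfL3 hfL4
  have j12 := hjoin.trans j2
  rcases hflip with ⟨hYL, hYR⟩ | ⟨hYL, hYR⟩
  · rw [cfg_flip_fst (σ₁' := 1) hYL] at j12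
    have j3 : JoinedIn (Mset a b c d) (cfg a b c d L 1 σ₂) (cfg a b c d R 1 σ₂) :=
      joined_move ha hb hc hd hone hσ₂ hL0 hR0 hfL1 hfL2 hfL3 hfL4 hfR1 hfR2 hfR3 hfR4
    have j123 := j12.trans j3
    rw [cfg_flip_snd (σ₂' := 1) hYR] at j123
    have j4 : JoinedIn (Mset a b c d) (cfg a b c d R 1 1) (cfg a b c d L 1 1) :=
      joined_move ha hb hc hd hone hone hR0 hL0 hfR1 hfR2 hfR3 hfR4 hfL1 hfL2 hfL3 hfL4
    exact (j123.trans j4).symm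
  · rw [cfg_flip_snd (σ₂' := 1) hYL] at j12
    have j3 : JoinedIn (Mset a b c d) (cfg a b c d L σ₁ 1) (cfg a b c d R σ₁ 1) :=
      joined_move ha hb hc hd hσ₁ hone hL0 hR0 hfL1 hfL2 hfL3 hfL4 hfR1 hfR2 hfR3 hfR4
    have j123 := j12.trans j3
    rw [cfg_flip_fst (σ₁' := 1) hYR] at j123
    have j4 : JoinedIn (Mset a b c d) (cfg a b c d R 1 1) (cfg a b c d L 1 1) :=
      joined_move ha hb hc hd hone hone hR0 hL0 hfR1 hfR2 hfR3 hfR4 hfL1 hfL2 hfL3 hfL4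
    exact (j123.trans j4).symm

end Stmt8Aux

open Stmt8Aux

theorem stmt_8 (a b c d : ℝ) (ha : 0 < a) (hb : 0 < b) (hc : 0 < c) (hd : 0 < d)
    (hnd : NonDeg a b c d) (hq : StrictQuad a b c d) :
    IsConnected {v : ℂ × ℂ × ℂ × ℂ |
        ‖(v.2.1 - v.1)‖ = a ∧ ‖(v.2.2.1 - v.2.1)‖ = b ∧
        ‖(v.2.2.2 - v.2.2.1)‖ = c ∧ ‖(v.1 - v.2.2.2)‖ = d} ↔
      (a + b - c - d) * (a - b + c - d) * (a - b - c + d) ≥ 0 := by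
  have h1 : a + b - c - d ≠ 0 := by
    have := hnd 1 1 (-1) (-1) (Or.inl rfl) (Or.inl rfl) (Or.inr rfl) (Or.inr rfl)
    intro h; apply this; linarith
  have h2 : a - b + c - d ≠ 0 := by
    have := hnd 1 (-1) 1 (-1) (Or.inl rfl) (Or.inr rfl) (Or.inl rfl) (Or.inr rfl)
    intro h; apply this; linarith
  have h3 : a - b - c + d ≠ 0 := by
    have := hnd 1 (-1) (-1) 1 (Or.inl rfl) (Or.inr rfl) (Or.inr rfl) (Or.inl rfl)
    intro h; apply this; linarith
  obtain ⟨hq1, hq2, hq3, hq4⟩ := hq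
  have hab_dc : |a - b| < d + c := abs_sub_lt_iff.mpr ⟨by linarith, by linarith⟩
  have hdc_ab : |d - c| < a + b := abs_sub_lt_iff.mpr ⟨by linarith, by linarith⟩
  have habs_ab : |a - b| < a + b := abs_sub_lt_iff.mpr ⟨by linarith, by linarith⟩
  have habs_dc : |d - c| < d + c := abs_sub_lt_iff.mpr ⟨by linarith, by linarith⟩
  show IsConnected (Mset a b c d) ↔ _
  constructor
  · intro hcon
    by_contra hP
    push_neg at hP
    rcases sign_neg_cases hP with ⟨hc1, hc2⟩ | ⟨hc1, hc2⟩
    · -- `a+b < c+d` and `|d-c| < |a-b|`: the triangle on `(d,c)` never degenerates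
      set r : ℝ := (|a - b| + (a + b))/2 with hrdef
      have hr1 : |a - b| ≤ r := by rw [hrdef]; linarith
      have hr2 : r ≤ a + b := by rw [hrdef]; linarith
      have hr3 : |d - c| ≤ r := le_trans hc2.le hr1
      have hr4 : r ≤ d + c := by
        have : a + b ≤ d + c := by linarith
        linarith
      have hr0 : 0 < r := lt_of_le_of_lt (abs_nonneg (d - c)) (lt_of_lt_of_le hc2 hr1)
      have hY : 0 < YY d c r := YY_pos hd.le hc.le hr0 (lt_of_lt_of_le hc2 hr1)
        (lt_of_le_of_lt hr2 (by linarith))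
      have hone : (1:ℝ)^2 = 1 := one_pow 2
      have hmone : (-1:ℝ)^2 = 1 := by norm_num
      have hpmem := cfg_mem (a := a) (b := b) (c := c) (d := d)
        ha.le hb.le hc.le hd.le hr0 hone hone hr1 hr2 hr3 hr4
      have hqmem := cfg_mem (a := a) (b := b) (c := c) (d := d)
        ha.le hb.le hc.le hd.le hr0 hone hmone hr1 hr2 hr3 hr4
      set f : ℂ × ℂ × ℂ × ℂ → ℝ :=
        fun v => ((v.2.2.2 - v.1) * (starRingEnd ℂ) (v.2.2.1 - v.1)).im with hfdef
      have hf : Continuous f := by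
        apply Complex.continuous_im.comp
        exact ((continuous_snd.comp (continuous_snd.comp continuous_snd)).sub
            continuous_fst).mul (Complex.continuous_conj.comp
            ((continuous_fst.comp (continuous_snd.comp continuous_snd)).sub continuous_fst))
      have hfp : 0 < f (cfg a b c d r 1 1) := by
        have he : f (cfg a b c d r 1 1) = 1 * YY d c r * r := inv2_cfg a b c d r 1 1
        rw [he]; nlinarith
      have hfq : f (cfg a b c d r 1 (-1)) < 0 := by
        have he : f (cfg a b c d r 1 (-1)) = (-1) * YY d c r * r := inv2_cfg a b c d r 1 (-1)
        rw [he]; nlinarith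
      obtain ⟨v, hvS, hv0⟩ := no_zero_crossing hcon hf hpmem hqmem hfp hfq
      obtain ⟨vb1, vb2, vb3, vb4⟩ := r_bounds hvS
      exact inv2_ne hvS (lt_of_lt_of_le hc2 vb1) (lt_of_le_of_lt vb2 (by linarith)) hv0
    · -- `c+d < a+b` and `|a-b| < |d-c|`: the triangle on `(a,b)` never degenerates
      set r : ℝ := (|d - c| + (d + c))/2 with hrdef
      have hr3 : |d - c| ≤ r := by rw [hrdef]; linarith
      have hr4 : r ≤ d + c := by rw [hrdef]; linarith
      have hr1 : |a - b| ≤ r := le_trans hc2.le hr3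
      have hr2 : r ≤ a + b := by
        have : d + c ≤ a + b := by linarith
        linarith
      have hr0 : 0 < r := lt_of_le_of_lt (abs_nonneg (a - b)) (lt_of_lt_of_le hc2 hr3)
      have hY : 0 < YY a b r := YY_pos ha.le hb.le hr0 (lt_of_lt_of_le hc2 hr3)
        (lt_of_le_of_lt hr4 (by linarith))
      have hone : (1:ℝ)^2 = 1 := one_pow 2
      have hmone : (-1:ℝ)^2 = 1 := by norm_num
      have hpmem := cfg_mem (a := a) (b := b) (c := c) (d := d)
        ha.le hb.le hc.le hd.le hr0 hone hone hr1 hr2 hr3 hr4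
      have hqmem := cfg_mem (a := a) (b := b) (c := c) (d := d)
        ha.le hb.le hc.le hd.le hr0 hmone hone hr1 hr2 hr3 hr4
      set f : ℂ × ℂ × ℂ × ℂ → ℝ :=
        fun v => ((v.2.1 - v.1) * (starRingEnd ℂ) (v.2.2.1 - v.1)).im with hfdef
      have hf : Continuous f := by
        apply Complex.continuous_im.comp
        exact ((continuous_fst.comp continuous_snd).sub
            continuous_fst).mul (Complex.continuous_conj.comp
            ((continuous_fst.comp (continuous_snd.comp continuous_snd)).sub continuous_fst))
      have hfp : 0 < f (cfg a b c d r 1 1) := by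
        have he : f (cfg a b c d r 1 1) = 1 * YY a b r * r := inv1_cfg a b c d r 1 1
        rw [he]; nlinarith
      have hfq : f (cfg a b c d r (-1) 1) < 0 := by
        have he : f (cfg a b c d r (-1) 1) = (-1) * YY a b r * r := inv1_cfg a b c d r (-1) 1
        rw [he]; nlinarith
      obtain ⟨v, hvS, hv0⟩ := no_zero_crossing hcon hf hpmem hqmem hfp hfq
      obtain ⟨vb1, vb2, vb3, vb4⟩ := r_bounds hvS
      exact inv1_ne hvS (lt_of_lt_of_le hc2 vb3) (lt_of_le_of_lt vb4 (by linarith)) hv0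
  · intro hP
    rcases sign_pos_cases h1 h2 h3 hP with ⟨hc1, hc2⟩ | ⟨hc1, hc2⟩
    · -- `c+d < a+b` and `|d-c| < |a-b|`: take `L = |a-b|`, `R = d+c`
      have hL0 : 0 < |a - b| := lt_of_le_of_lt (abs_nonneg (d - c)) hc2
      have hab : a ≠ b := by
        intro h
        rw [h] at hL0
        simp at hL0
      have hR0 : (0:ℝ) < d + c := by linarith
      have hfR2 : d + c ≤ a + b := by linarith
      exact isConnected_of_flips ha.le hb.le hc.le hd.le hL0 hR0
        le_rfl habs_ab.le hc2.le hab_dc.le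
        hab_dc.le hfR2 habs_dc.le le_rfl
        (Or.inl le_rfl)
        (Or.inl ⟨YY_left hab, YY_right hR0⟩)
    · -- `a+b < c+d` and `|a-b| < |d-c|`: take `L = |d-c|`, `R = a+b`
      have hL0 : 0 < |d - c| := lt_of_le_of_lt (abs_nonneg (a - b)) hc2
      have hdc : d ≠ c := by
        intro h
        rw [h] at hL0
        simp at hL0
      have hR0 : (0:ℝ) < a + b := by linarith
      have hfR4 : a + b ≤ d + c := by linarith
      exact isConnected_of_flips ha.le hb.le hc.le hd.le hL0 hR0
        hc2.le hdc_ab.le le_rfl habs_dc.le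
        habs_ab.le le_rfl hdc_ab.le hfR4
        (Or.inr le_rfl)
        (Or.inr ⟨YY_left hdc, YY_right hR0⟩)
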